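/- If there exists a propelinear perfect binary code of length n containing the all-zero vector with rank r, then there exists a propelinear perfect binary code of length 2n+1 containing the all-zero vector with rank r + n (obtained as the Vasil'ev code with the zero function λ ≡ 0). -/

import Mathlib

open Finset

/-- The binary vector space `F^n`. -/
abbrev F (n : ℕ) : Type := Fin n → ZMod 2

/-- Action of a coordinate permutation: `(π x) i = x (π⁻¹ i)`. -/
def permAct {n : ℕ} (π : Equiv.Perm (Fin n)) (x : F n) : F n := fun i => x (π⁻¹ i)

/-- `(v, π)` is an isometry fixing the code `C` set-wise. -/
def IsIsoPair {n : ℕ} (C : Set (F n)) (v : F n) (π : Equiv.Perm (Fin n)) : Prop :=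
  (fun x => v + permAct π x) '' C = C

/-- `C` is a single-error-correcting perfect binary code. -/
def IsPerfectCode {n : ℕ} (C : Set (F n)) : Prop :=
  ∀ x : F n, ∃! y : F n, y ∈ C ∧ hammingDist x y ≤ 1

/-- `P` is a propelinear structure on the code `C`. -/
def IsPropStructure {n : ℕ} (C : Set (F n)) (P : F n → Equiv.Perm (Fin n)) : Prop :=
  (∀ x ∈ C, IsIsoPair C x (P x)) ∧
  (∀ x ∈ C, ∀ y ∈ C, P (x + permAct (P x) y) = P x * P y)

/-- `C` admits a propelinear structure. -/
def IsPropelinear {n : ℕ} (C : Set (F n)) : Prop :=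
  ∃ P : F n → Equiv.Perm (Fin n), IsPropStructure C P

/-- The rank of a code: dimension of its linear span over GF(2). -/
noncomputable def codeRank {n : ℕ} (C : Set (F n)) : ℕ :=
  Module.finrank (ZMod 2) (Submodule.span (ZMod 2) C)

/-- The kernel of a code `C`: codewords whose translate fixes `C`. -/
def codeKernel {n : ℕ} (C : Set (F n)) : Set (F n) :=
  {x ∈ C | (fun c => x + c) '' C = C}

/-- A propelinear structure is normalized if codewords in the same coset
of the kernel get the same permutation. -/
def IsNormalized {n : ℕ} (C : Set (F n)) (P : F n → Equiv.Perm (Fin n)) : Prop :=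
  ∀ x ∈ C, ∀ y ∈ C, x + y ∈ codeKernel C → P x = P y

/-- A code is transitive if its automorphism group acts transitively on it. -/
def IsTransitive {n : ℕ} (C : Set (F n)) : Prop :=
  ∀ x ∈ C, ∀ y ∈ C, ∃ v π, IsIsoPair C v π ∧ v + permAct π x = y

/-- The (ZMod 2) weight parity `|x| = Σ_i x_i`. -/
def wt {n : ℕ} (x : F n) : ZMod 2 := ∑ i, x i

/-- Assemble a vector of `F^(2n+1)` from a first block of `n` coordinates,
a middle coordinate and a last block of `n` coordinates. -/
def vasVec {n : ℕ} (a : F n) (b : ZMod 2) (c : F n) : F (2 * n + 1) :=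
  fun i =>
    if h : (i : ℕ) < n then a ⟨i, h⟩
    else if h' : (i : ℕ) = n then b
    else c ⟨(i : ℕ) - (n + 1), by have := i.isLt; omega⟩

/-- The Vasil'ev code of `C` with function `lam`. -/
def vasCode {n : ℕ} (C : Set (F n)) (lam : F n → ZMod 2) : Set (F (2 * n + 1)) :=
  {w | ∃ x : F n, ∃ y ∈ C, w = vasVec (x + y) (wt x + lam y) x}

/-- Assemble a vector of `F^(tm+t+m)` from blocks of `tm`, `t` and `m` coordinates. -/
def mollVec {t m : ℕ} (x : F (t * m)) (b : F t) (c : F m) : F (t * m + t + m) :=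
  fun i =>
    if h : (i : ℕ) < t * m then x ⟨i, h⟩
    else if h' : (i : ℕ) < t * m + t then b ⟨(i : ℕ) - t * m, by omega⟩
    else c ⟨(i : ℕ) - (t * m + t), by have := i.isLt; omega⟩

/-- First generalized parity-check function: `p1(x)_i = Σ_j x_{ij}`. -/
def p1 {t m : ℕ} (x : F (t * m)) : F t := fun i => ∑ j : Fin m, x (finProdFinEquiv (i, j))

/-- Second generalized parity-check function: `p2(x)_j = Σ_i x_{ij}`. -/
def p2 {t m : ℕ} (x : F (t * m)) : F m := fun j => ∑ i : Fin t, x (finProdFinEquiv (i, j))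

/-- The Mollard code of `Ct` and `Cm` with function `f`. -/
def mollCode {t m : ℕ} (Ct : Set (F t)) (Cm : Set (F m)) (f : F t → F m) :
    Set (F (t * m + t + m)) :=
  {w | ∃ x : F (t * m), ∃ y ∈ Ct, ∃ z ∈ Cm, w = mollVec x (y + p1 x) (z + p2 x + f y)}

section Infra
variable {n : ℕ}

def e1 (i : Fin n) : Fin (2 * n + 1) := ⟨i, by omega⟩
def eM : Fin (2 * n + 1) := ⟨n, by omega⟩
def e3 (i : Fin n) : Fin (2 * n + 1) := ⟨n + 1 + i, by omega⟩

@[simp] lemma vasVec_e1 (a : F n) (b : ZMod 2) (c : F n) (i : Fin n) :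
    vasVec a b c (e1 i) = a i := by
  have h : ((e1 i : Fin (2*n+1)) : ℕ) < n := i.isLt
  simp only [vasVec, dif_pos h]
  congr 1

@[simp] lemma vasVec_eM (a : F n) (b : ZMod 2) (c : F n) :
    vasVec a b c (eM : Fin (2*n+1)) = b := by
  simp [vasVec, eM]

@[simp] lemma vasVec_e3 (a : F n) (b : ZMod 2) (c : F n) (i : Fin n) :
    vasVec a b c (e3 i) = c i := by
  have h1 : ¬ ((e3 i : Fin (2*n+1)) : ℕ) < n := by simp [e3]; omega
  have h2 : ¬ ((e3 i : Fin (2*n+1)) : ℕ) = n := by simp [e3]; omega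
  simp only [vasVec, dif_neg h1, dif_neg h2]
  congr 1
  simp [e3]

lemma rep (i : Fin (2 * n + 1)) : (∃ j, i = e1 j) ∨ i = eM ∨ ∃ j, i = e3 j := by
  rcases lt_trichotomy (i : ℕ) n with h | h | h
  · exact Or.inl ⟨⟨i, h⟩, by simp [e1]⟩
  · exact Or.inr (Or.inl (by simp [eM, Fin.ext_iff, h]))
  · refine Or.inr (Or.inr ⟨⟨(i : ℕ) - (n+1), by have := i.isLt; omega⟩, ?_⟩)
    simp [e3, Fin.ext_iff]; omega

/-- the splitting equivalence -/
def splitE : Fin n ⊕ Fin 1 ⊕ Fin n ≃ Fin (2 * n + 1) where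
  toFun j := match j with
    | Sum.inl i => e1 i
    | Sum.inr (Sum.inl _) => eM
    | Sum.inr (Sum.inr i) => e3 i
  invFun i :=
    if h : (i : ℕ) < n then Sum.inl ⟨i, h⟩
    else if h' : (i : ℕ) = n then Sum.inr (Sum.inl 0)
    else Sum.inr (Sum.inr ⟨(i : ℕ) - (n + 1), by have := i.isLt; omega⟩)
  left_inv j := by
    rcases j with i | j | i
    · simp [e1]
    · have : ¬ ((eM : Fin (2*n+1)) : ℕ) < n := by simp [eM]
      simp only [this, dif_neg, not_false_iff]
      simp [eM, Fin.ext_iff]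
    · have h1 : ¬ ((e3 i : Fin (2*n+1)) : ℕ) < n := by simp [e3]; omega
      have h2 : ¬ ((e3 i : Fin (2*n+1)) : ℕ) = n := by simp [e3]; omega
      simp only [dif_neg h1, dif_neg h2]
      simp [e3, Fin.ext_iff]
  right_inv i := by
    by_cases h : (i : ℕ) < n
    · simp only [dif_pos h]; simp [e1]
    · by_cases h' : (i : ℕ) = n
      · simp only [dif_neg h, dif_pos h']; simp [eM, Fin.ext_iff, h']
      · simp only [dif_neg h, dif_neg h']; simp [e3, Fin.ext_iff]; omega

lemma sum_split {M : Type*} [AddCommMonoid M] (f : Fin (2 * n + 1) → M) :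
    ∑ i, f i = (∑ i : Fin n, f (e1 i)) + f eM + ∑ i : Fin n, f (e3 i) := by
  rw [← Fintype.sum_equiv splitE (fun j => f (splitE j)) f (fun j => rfl)]
  rw [Fintype.sum_sum_type]
  simp [splitE, Fintype.sum_sum_type, add_assoc]

end Infra

lemma addF_self (x : F n) : x + x = 0 := funext fun i => CharTwo.add_self_eq_zero _

lemma cancel_left (x y : F n) : x + (x + y) = y := by rw [← add_assoc, addF_self, zero_add]

lemma dist_norm (x y : F n) : hammingDist x y = hammingNorm (x + y) := by
  have h : x + y = x - y := by
    funext i; rw [Pi.add_apply, Pi.sub_apply, CharTwo.sub_eq_add]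
  rw [h, hammingDist_eq_hammingNorm]
  congr 1; funext i; rw [Pi.add_apply, Pi.neg_apply, Pi.sub_apply, CharTwo.neg_eq, CharTwo.sub_eq_add]

lemma norm_sum (x : F n) : hammingNorm x = ∑ i, if x i = 0 then 0 else 1 := by
  rw [hammingNorm, Finset.card_filter]
  congr 1
  funext i
  by_cases h : x i = 0 <;> simp [h]

lemma wt_eq_cast (x : F n) : wt x = (hammingNorm x : ZMod 2) := by
  have key : ∀ v : ZMod 2, v = ((if v = 0 then 0 else 1 : ℕ) : ZMod 2) := by decide
  rw [norm_sum, Nat.cast_sum, wt]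
  exact Finset.sum_congr rfl fun i _ => key (x i)

lemma wt_add (x y : F n) : wt (x + y) = wt x + wt y := by
  simp [wt, Finset.sum_add_distrib]

lemma wt_zero : wt (0 : F n) = 0 := by simp [wt]

lemma norm_zero_iff (x : F n) : hammingNorm x = 0 ↔ x = 0 := hammingNorm_eq_zero

lemma dist_eq_zero_iff (x y : F n) : hammingDist x y = 0 ↔ x = y := hammingDist_eq_zero

section More
variable {n : ℕ}

lemma vasVec_add (a a' : F n) (b b' : ZMod 2) (c c' : F n) :
    vasVec a b c + vasVec a' b' c' = vasVec (a + a') (b + b') (c + c') := by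
  funext i
  rcases rep i with ⟨j, rfl⟩ | rfl | ⟨j, rfl⟩ <;> simp

lemma vasVec_eta (w : F (2 * n + 1)) :
    w = vasVec (fun i => w (e1 i)) (w eM) (fun i => w (e3 i)) := by
  funext i
  rcases rep i with ⟨j, rfl⟩ | rfl | ⟨j, rfl⟩ <;> simp

lemma wt_vasVec (a : F n) (b : ZMod 2) (c : F n) :
    wt (vasVec a b c) = wt a + b + wt c := by
  rw [wt, sum_split]
  simp [wt]

lemma norm_vasVec (a : F n) (b : ZMod 2) (c : F n) :
    hammingNorm (vasVec a b c) =
      hammingNorm a + (if b = 0 then 0 else 1) + hammingNorm c := by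
  rw [norm_sum, sum_split, norm_sum, norm_sum]
  simp

lemma dist_vasVec (a a' : F n) (b b' : ZMod 2) (c c' : F n) :
    hammingDist (vasVec a b c) (vasVec a' b' c') =
      hammingDist a a' + (if b = b' then 0 else 1) + hammingDist c c' := by
  rw [dist_norm, dist_norm, dist_norm, vasVec_add, norm_vasVec]
  congr 2
  by_cases h : b = b'
  · simp [h, CharTwo.add_self_eq_zero]
  · have : b + b' ≠ 0 := by
      intro hc; apply h
      revert hc h; revert b b'; decide
    simp [h, this]

end More

section Perm
variable {n : ℕ}

lemma permAct_add (π : Equiv.Perm (Fin n)) (x y : F n) :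
    permAct π (x + y) = permAct π x + permAct π y := rfl

lemma permAct_mul (π ρ : Equiv.Perm (Fin n)) (x : F n) :
    permAct (π * ρ) x = permAct π (permAct ρ x) := by
  funext i; simp [permAct, mul_inv_rev]

lemma permAct_inv_act (π : Equiv.Perm (Fin n)) (x : F n) :
    permAct π⁻¹ (permAct π x) = x := by
  funext i; simp [permAct]

lemma wt_permAct (π : Equiv.Perm (Fin n)) (x : F n) :
    wt (permAct π x) = wt x := by
  simpa [wt, permAct] using Equiv.sum_comp π⁻¹ x

def blockPerm (σ : Equiv.Perm (Fin n)) : Equiv.Perm (Fin (2 * n + 1)) :=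
  (splitE.symm.trans
    ((Equiv.sumCongr σ (Equiv.sumCongr (Equiv.refl (Fin 1)) σ)).trans splitE))

@[simp] lemma blockPerm_e1 (σ : Equiv.Perm (Fin n)) (i : Fin n) :
    blockPerm σ (e1 i) = e1 (σ i) := by
  have h : splitE.symm (e1 i) = Sum.inl i := splitE.symm_apply_eq.mpr rfl
  simp only [blockPerm, Equiv.trans_apply, h, Equiv.sumCongr_apply, Sum.map_inl]
  rfl

@[simp] lemma blockPerm_eM (σ : Equiv.Perm (Fin n)) :
    blockPerm σ (eM : Fin (2*n+1)) = eM := by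
  have h : splitE.symm (eM : Fin (2*n+1)) = Sum.inr (Sum.inl 0) := splitE.symm_apply_eq.mpr rfl
  simp only [blockPerm, Equiv.trans_apply, h, Equiv.sumCongr_apply, Sum.map_inr, Sum.map_inl,
    Equiv.refl_apply]
  rfl

@[simp] lemma blockPerm_e3 (σ : Equiv.Perm (Fin n)) (i : Fin n) :
    blockPerm σ (e3 i) = e3 (σ i) := by
  have h : splitE.symm (e3 i) = Sum.inr (Sum.inr i) := splitE.symm_apply_eq.mpr rfl
  simp only [blockPerm, Equiv.trans_apply, h, Equiv.sumCongr_apply, Sum.map_inr]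
  rfl

lemma blockPerm_mul (σ τ : Equiv.Perm (Fin n)) :
    blockPerm (σ * τ) = blockPerm σ * blockPerm τ := by
  apply Equiv.ext
  intro i
  rcases rep i with ⟨j, rfl⟩ | rfl | ⟨j, rfl⟩ <;> simp [Equiv.Perm.mul_apply]

lemma blockPerm_one : blockPerm (1 : Equiv.Perm (Fin n)) = 1 := by
  apply Equiv.ext
  intro i
  rcases rep i with ⟨j, rfl⟩ | rfl | ⟨j, rfl⟩ <;> simp

lemma blockPerm_inv (σ : Equiv.Perm (Fin n)) :
    (blockPerm σ)⁻¹ = blockPerm σ⁻¹ := by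
  rw [inv_eq_iff_mul_eq_one, ← blockPerm_mul, mul_inv_cancel, blockPerm_one]

lemma permAct_blockPerm (σ : Equiv.Perm (Fin n)) (a : F n) (b : ZMod 2) (c : F n) :
    permAct (blockPerm σ) (vasVec a b c) = vasVec (permAct σ a) b (permAct σ c) := by
  funext i
  rcases rep i with ⟨j, rfl⟩ | rfl | ⟨j, rfl⟩ <;>
    simp [permAct, blockPerm_inv, permAct]

end Perm

section Perfect
variable {n : ℕ}

lemma hnorm_add_le (u v : F n) :
    hammingNorm (u + v) ≤ hammingNorm u + hammingNorm v := by
  have h := hammingDist_triangle u 0 v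
  rw [← dist_norm, hammingDist_zero_right, hammingDist_zero_left] at *
  exact h

lemma mem_vas0 {C : Set (F n)} (w : F (2*n+1)) :
    w ∈ vasCode C (fun _ => 0) ↔ ∃ x, ∃ y ∈ C, w = vasVec (x + y) (wt x) x := by
  simp [vasCode]

lemma zmod2_cases (v : ZMod 2) : v = 0 ∨ v = 1 := by revert v; decide

lemma zmod2_ne (x y : ZMod 2) (h : x ≠ y) : x = y + 1 := by revert h; revert x y; decide

lemma vas_perfect {C : Set (F n)} (hC : IsPerfectCode C) :
    IsPerfectCode (vasCode C (fun _ => 0)) := by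
  intro w
  set a : F n := fun i => w (e1 i) with ha
  set b : ZMod 2 := w eM with hb
  set c : F n := fun i => w (e3 i) with hc
  have hw : w = vasVec a b c := vasVec_eta w
  obtain ⟨y, ⟨hyC, hyd⟩, huniq⟩ := hC (a + c)
  -- distance formula to a general codeword
  have distf : ∀ x y' : F n, hammingDist w (vasVec (x + y') (wt x) x) =
      hammingDist a (x + y') + (if b = wt x then 0 else 1) + hammingDist c x := by
    intro x y'
    rw [hw, dist_vasVec]
  -- y-recovery bound
  have ybound : ∀ x y' : F n, hammingDist w (vasVec (x + y') (wt x) x) ≤ 1 →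
      hammingDist (a + c) y' ≤ 1 := by
    intro x y' hle
    rw [distf] at hle
    have h1 : hammingDist (a + c) y' ≤ hammingDist a (x + y') + hammingDist c x := by
      rw [dist_norm, dist_norm, dist_norm]
      have he : a + c + y' = (a + (x + y')) + (c + x) := by
        have hx : x + x = 0 := addF_self x
        have : (a + (x + y')) + (c + x) = (a + c + y') + (x + x) := by abel
        rw [this, hx, add_zero]
      rw [he]
      exact hnorm_add_le _ _
    split_ifs at hle <;> omega
  -- uniqueness of close codewords
  have uniq2 : ∀ w1 ∈ vasCode C (fun _ => 0), hammingDist w w1 ≤ 1 →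
      ∀ w2 ∈ vasCode C (fun _ => 0), hammingDist w w2 ≤ 1 → w1 = w2 := by
    intro w1 h1 hd1 w2 h2 hd2
    obtain ⟨x1, y1, hy1, rfl⟩ := (mem_vas0 _).mp h1
    obtain ⟨x2, y2, hy2, rfl⟩ := (mem_vas0 _).mp h2
    have ey1 : y1 = y := huniq y1 ⟨hy1, ybound _ _ hd1⟩
    have ey2 : y2 = y := huniq y2 ⟨hy2, ybound _ _ hd2⟩
    rw [ey1] at hd1 ⊢; rw [ey2] at hd2 ⊢
    have hdd : hammingDist (vasVec (x1 + y) (wt x1) x1) (vasVec (x2 + y) (wt x2) x2) ≤ 2 := by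
      have ht := hammingDist_triangle (vasVec (x1 + y) (wt x1) x1) w (vasVec (x2 + y) (wt x2) x2)
      rw [hammingDist_comm _ w] at ht
      omega
    rw [dist_vasVec] at hdd
    have hxx : hammingDist (x1 + y) (x2 + y) = hammingDist x1 x2 := by
      rw [dist_norm, dist_norm]
      congr 1
      have hy' : y + y = 0 := addF_self y
      have : x1 + y + (x2 + y) = (x1 + x2) + (y + y) := by abel
      rw [this, hy', add_zero]
    rw [hxx] at hdd
    by_cases hx : x1 = x2
    · rw [hx]
    · exfalso
      have hd12 : 1 ≤ hammingDist x1 x2 :=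
        Nat.one_le_iff_ne_zero.mpr (fun h0 => hx (hammingDist_eq_zero.mp h0))
      have hwt : wt x1 = wt x2 := by
        by_contra hne
        rw [if_neg hne] at hdd
        omega
      have hd1' : hammingDist x1 x2 = 1 := by
        rw [if_pos hwt] at hdd; omega
      have hpar : wt x1 + wt x2 = (1 : ZMod 2) := by
        rw [← wt_add, wt_eq_cast, ← dist_norm, hd1', Nat.cast_one]
      rw [hwt, CharTwo.add_self_eq_zero] at hpar
      exact zero_ne_one hpar
  -- existence
  by_cases hbc : b = wt c
  · refine ⟨vasVec (c + y) (wt c) c, ⟨(mem_vas0 _).mpr ⟨c, y, hyC, rfl⟩, ?_⟩,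
      fun z hz => uniq2 z hz.1 hz.2 _ ((mem_vas0 _).mpr ⟨c, y, hyC, rfl⟩ ) ?_⟩
    all_goals {
      rw [distf c y]
      have hac : hammingDist a (c + y) = hammingDist (a + c) y := by
        rw [dist_norm, dist_norm, add_assoc]
      rw [hac, if_pos hbc, hammingDist_self]
      omega }
  · have hmem : vasVec ((a + y) + y) (wt (a + y)) (a + y) ∈ vasCode C (fun _ => 0) :=
      (mem_vas0 _).mpr ⟨a + y, y, hyC, rfl⟩
    have hayy : (a + y) + y = a := by
      rw [add_assoc, addF_self, add_zero]
    have hca : hammingDist c (a + y) = hammingDist (a + c) y := by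
      rw [dist_norm, dist_norm]
      congr 1
      abel
    have hwx : wt (a + y) = wt c + (hammingDist (a + c) y : ZMod 2) := by
      have hobs : a + y = c + (a + c + y) := by
        have hcc : c + c = 0 := addF_self c
        have : c + (a + c + y) = (a + y) + (c + c) := by abel
        rw [this, hcc, add_zero]
      rw [hobs, wt_add, wt_eq_cast (a + c + y), ← dist_norm]
    have hdist : hammingDist w (vasVec ((a + y) + y) (wt (a + y)) (a + y)) ≤ 1 := by
      rw [distf (a + y) y, hayy, hammingDist_self, hca]
      interval_cases hd : hammingDist (a + c) y
      · have hwc : wt (a + y) = wt c := by rw [hwx]; simp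
        rw [hwc, if_neg hbc]
      · have hb1 : b = wt c + 1 := zmod2_ne b (wt c) hbc
        have hbw : b = wt (a + y) := by rw [hwx, Nat.cast_one]; exact hb1
        rw [if_pos hbw]
    exact ⟨_, ⟨hmem, hdist⟩, fun z hz => uniq2 z hz.1 hz.2 _ hmem hdist⟩

end Perfect

section Prop'
variable {n : ℕ}

lemma xyx (x y : F n) : (x + y) + x = y := by
  rw [add_comm x y, add_assoc, addF_self, add_zero]

/-- y-part extraction -/
def yw (w : F (2 * n + 1)) : F n := fun i => w (e1 i) + w (e3 i)

lemma yw_vas (a : F n) (b : ZMod 2) (c : F n) : yw (vasVec a b c) = a + c := by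
  funext i; simp [yw]

lemma yw_code (x y : F n) (b : ZMod 2) : yw (vasVec (x + y) b x) = y := by
  rw [yw_vas, xyx]

lemma permAct_act_inv (π : Equiv.Perm (Fin n)) (x : F n) :
    permAct π (permAct π⁻¹ x) = x := by
  funext i; simp [permAct]

lemma vas_propelinear {C : Set (F n)} (hProp : IsPropelinear C) :
    IsPropelinear (vasCode C (fun _ => 0)) := by
  obtain ⟨P, hIso, hMul⟩ := hProp
  refine ⟨fun w => blockPerm (P (yw w)), ?_, ?_⟩
  · -- iso pairs
    rintro w hw
    obtain ⟨x, y, hyC, rfl⟩ := (mem_vas0 w).mp hw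
    show IsIsoPair _ _ (blockPerm (P (yw (vasVec (x + y) (wt x) x))))
    rw [yw_code]
    unfold IsIsoPair
    set σ := P y with hσ
    have hIsoY := hIso y hyC
    apply Set.eq_of_subset_of_subset
    · rintro v ⟨u, hu, rfl⟩
      obtain ⟨x', y', hy', rfl⟩ := (mem_vas0 u).mp hu
      beta_reduce
      rw [permAct_blockPerm, permAct_add, vasVec_add]
      refine (mem_vas0 _).mpr ⟨x + permAct σ x', y + permAct σ y', ?_, ?_⟩
      · rw [← hIsoY]; exact ⟨y', hy', rfl⟩
      · have hA : x + y + (permAct σ x' + permAct σ y') =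
            (x + permAct σ x') + (y + permAct σ y') := by abel
        have hB : wt x + wt x' = wt (x + permAct σ x') := by rw [wt_add, wt_permAct]
        rw [hA, hB]
    · rintro v hv
      obtain ⟨x'', y'', hy'', rfl⟩ := (mem_vas0 v).mp hv
      have : y'' ∈ (fun z => y + permAct σ z) '' C := by rw [hIsoY]; exact hy''
      obtain ⟨z, hzC, hz⟩ := this
      refine ⟨vasVec (permAct σ⁻¹ (x + x'') + z) (wt (permAct σ⁻¹ (x + x''))) (permAct σ⁻¹ (x + x'')),
        (mem_vas0 _).mpr ⟨_, z, hzC, rfl⟩, ?_⟩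
      beta_reduce
      beta_reduce at hz
      rw [permAct_blockPerm, permAct_add, vasVec_add, permAct_act_inv]
      have hA : x + y + (x + x'' + permAct σ z) = x'' + (y + permAct σ z) := by
        have hxx : x + x = 0 := addF_self x
        have e : x + y + (x + x'' + permAct σ z) = (x'' + (y + permAct σ z)) + (x + x) := by abel
        rw [e, hxx, add_zero]
      have hB : wt x + wt (permAct σ⁻¹ (x + x'')) = wt x'' := by
        rw [wt_permAct, wt_add, ← add_assoc, CharTwo.add_self_eq_zero, zero_add]
      rw [hA, hz, hB, cancel_left]
  · -- composition
    rintro w hw u hu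
    obtain ⟨x, y, hyC, rfl⟩ := (mem_vas0 w).mp hw
    obtain ⟨x', y', hy', rfl⟩ := (mem_vas0 u).mp hu
    beta_reduce
    rw [yw_code, yw_code]
    rw [permAct_blockPerm, permAct_add, vasVec_add]
    have hyw : yw (vasVec (x + y + (permAct (P y) x' + permAct (P y) y'))
        (wt x + wt x') (x + permAct (P y) x')) = y + permAct (P y) y' := by
      rw [yw_vas]
      have hxx : x + x = 0 := addF_self x
      have hxx' : permAct (P y) x' + permAct (P y) x' = 0 := addF_self _
      have : x + y + (permAct (P y) x' + permAct (P y) y') + (x + permAct (P y) x') =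
          (y + permAct (P y) y') + ((x + x) + (permAct (P y) x' + permAct (P y) x')) := by abel
      rw [this, hxx, hxx', add_zero, add_zero]
    rw [hyw, hMul y hyC y' hy', blockPerm_mul]

end Prop'

section Rank
variable {n : ℕ}

def j1 : F n →ₗ[ZMod 2] F (2 * n + 1) :=
  (AddMonoidHom.mk' (fun z => vasVec z 0 0)
    (fun z z' => by simp [vasVec_add])).toZModLinearMap 2

def j2 : F n →ₗ[ZMod 2] F (2 * n + 1) :=
  (AddMonoidHom.mk' (fun x => vasVec x (wt x) x)
    (fun x x' => by simp [vasVec_add, wt_add])).toZModLinearMap 2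

@[simp] lemma j1_apply (z : F n) : j1 z = vasVec z 0 0 := rfl
@[simp] lemma j2_apply (x : F n) : j2 x = vasVec x (wt x) x := rfl

lemma j1_inj : Function.Injective (j1 (n := n)) := by
  intro z z' h
  funext i
  have := congrFun h (e1 i)
  simpa using this

lemma j2_inj : Function.Injective (j2 (n := n)) := by
  intro z z' h
  funext i
  have := congrFun h (e3 i)
  simpa using this

lemma vas_rank {C : Set (F n)} (h0 : (0 : F n) ∈ C) :
    codeRank (vasCode C (fun _ => 0)) = codeRank C + n := by
  have hspan : Submodule.span (ZMod 2) (vasCode C (fun _ => 0)) =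
      (Submodule.span (ZMod 2) C).map j1 ⊔ LinearMap.range j2 := by
    apply le_antisymm
    · rw [Submodule.span_le]
      rintro w hw
      obtain ⟨x, y, hy, rfl⟩ := (mem_vas0 w).mp hw
      have hrepr : vasVec (x + y) (wt x) x = j1 y + j2 x := by
        rw [j1_apply, j2_apply, vasVec_add, zero_add, zero_add, add_comm y x]
      rw [hrepr]
      exact Submodule.add_mem_sup (Submodule.mem_map_of_mem (Submodule.subset_span hy))
        (LinearMap.mem_range_self _ x)
    · apply sup_le
      · rw [Submodule.map_span, Submodule.span_le]
        rintro w ⟨y, hy, rfl⟩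
        apply Submodule.subset_span
        refine (mem_vas0 _).mpr ⟨0, y, hy, ?_⟩
        rw [j1_apply, zero_add, wt_zero]
      · rintro w ⟨x, rfl⟩
        apply Submodule.subset_span
        refine (mem_vas0 _).mpr ⟨x, 0, h0, ?_⟩
        rw [j2_apply, add_zero]
  have hinf : (Submodule.span (ZMod 2) C).map j1 ⊓ LinearMap.range j2 = ⊥ := by
    rw [eq_bot_iff]
    rintro v hv
    obtain ⟨⟨z, hz, rfl⟩, x, hx⟩ := Submodule.mem_inf.mp hv
    have hx0 : x = 0 := by
      funext i
      have := congrFun hx (e3 i)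
      simpa using this
    rw [hx0] at hx
    rw [← hx, map_zero]
    exact Submodule.zero_mem ⊥
  have hfin := Submodule.finrank_sup_add_finrank_inf_eq
    ((Submodule.span (ZMod 2) C).map j1) (LinearMap.range j2)
  rw [hinf, finrank_bot, add_zero] at hfin
  rw [codeRank, hspan, hfin, codeRank,
    (Submodule.equivMapOfInjective j1 j1_inj _).symm.finrank_eq]
  congr 1
  rw [← (LinearEquiv.ofInjective j2 j2_inj).finrank_eq]
  exact Module.finrank_fin_fun _

end Rank

lemma vasVec_zero {n : ℕ} : vasVec (0 : F n) 0 0 = (0 : F (2 * n + 1)) := by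
  funext i
  rcases rep i with ⟨j, rfl⟩ | rfl | ⟨j, rfl⟩ <;> simp


/-- From a propelinear perfect code of length `n` and rank `r` one obtains a
propelinear perfect code of length `2n+1` and rank `r + n`. -/
theorem vasilev_rank_transfer {n r : ℕ}
    (h : ∃ C : Set (F n),
      IsPerfectCode C ∧ (0 : F n) ∈ C ∧ IsPropelinear C ∧ codeRank C = r) :
    ∃ C' : Set (F (2 * n + 1)),
      IsPerfectCode C' ∧ (0 : F (2 * n + 1)) ∈ C' ∧ IsPropelinear C' ∧
        codeRank C' = r + n := by
  obtain ⟨C, hperf, h0, hprop, hrank⟩ := h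
  refine ⟨vasCode C (fun _ => 0), vas_perfect hperf, ?_, vas_propelinear hprop, ?_⟩
  · refine (mem_vas0 _).mpr ⟨0, 0, h0, ?_⟩
    rw [add_zero, wt_zero, vasVec_zero]
  · rw [vas_rank h0, hrank]
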